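/- If gcd(m+1, n+1) = 1, then the complete tripartite graph K_{1,m,n} has an interval (m+n)-coloring. -/

import Mathlib

/-- The set of colors on edges incident to `v` (the spectrum of `v`). -/
def Spectrum {V : Type*} (G : SimpleGraph V) (c : G.edgeSet → ℕ) (v : V) : Set ℕ :=
  {k | ∃ e : G.edgeSet, v ∈ (e : Sym2 V) ∧ c e = k}

/-- `c` is an interval `t`-coloring of `G`: a proper edge-coloring with colors
`1,…,t`, all colors used, and each vertex's spectrum an interval of integers. -/
def IsIntervalColoring {V : Type*} (G : SimpleGraph V) (t : ℕ) (c : G.edgeSet → ℕ) : Prop :=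
  (∀ e, 1 ≤ c e ∧ c e ≤ t) ∧
  (∀ k, 1 ≤ k → k ≤ t → ∃ e, c e = k) ∧
  (∀ e₁ e₂ : G.edgeSet, e₁ ≠ e₂ → (∃ v, v ∈ (e₁ : Sym2 V) ∧ v ∈ (e₂ : Sym2 V)) →
    c e₁ ≠ c e₂) ∧
  (∀ v : V, ∃ a b : ℕ, Spectrum G c v = Set.Icc a b)

/-- Which part of the tripartition a vertex belongs to. -/
def tripart (m n : ℕ) : Fin 1 ⊕ Fin m ⊕ Fin n → Fin 3
  | .inl _ => 0
  | .inr (.inl _) => 1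
  | .inr (.inr _) => 2

/-- The complete tripartite graph `K_{1,m,n}`. -/
def K1mn (m n : ℕ) : SimpleGraph (Fin 1 ⊕ Fin m ⊕ Fin n) where
  Adj a b := tripart m n a ≠ tripart m n b
  symm := ⟨fun _ _ h => h.symm⟩
  loopless := ⟨fun _ h => h rfl⟩


def Pset (m n : ℕ) : Set ℕ :=
  {x | ∃ t, t * (n + 1) % (m + n + 2) = x ∧ ∀ t' ≤ t, t' * (n + 1) % (m + n + 2) ≠ m + n + 1}

lemma Pstep (m n t : ℕ) :
    (t + 1) * (n + 1) % (m + n + 2)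
      = (t * (n + 1) % (m + n + 2) + (n + 1)) % (m + n + 2) := by
  rw [add_mul, one_mul, Nat.add_mod, Nat.mod_eq_of_lt (by omega : n + 1 < m + n + 2)]

lemma P_zero (m n : ℕ) : 0 ∈ Pset m n := by
  refine ⟨0, by simp, ?_⟩
  intro t' ht'
  interval_cases t'
  simp

lemma P_lt (m n : ℕ) {x : ℕ} (h : x ∈ Pset m n) : x < m + n + 1 := by
  obtain ⟨t, ht, hall⟩ := h
  have := hall t le_rfl
  have := Nat.mod_lt (t * (n+1)) (by omega : 0 < m + n + 2)
  omega

lemma P_step_a (m n : ℕ) {x : ℕ} (hx : x + 1 ≤ m) (h : x ∈ Pset m n) :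
    x + n + 1 ∈ Pset m n := by
  obtain ⟨t, ht, hall⟩ := h
  have hnew : (t + 1) * (n + 1) % (m + n + 2) = x + n + 1 := by
    rw [Pstep, ht, Nat.mod_eq_of_lt (by omega)]; omega
  refine ⟨t + 1, hnew, ?_⟩
  intro t' ht'
  rcases Nat.lt_or_ge t' (t+1) with h1 | h1
  · exact hall t' (by omega)
  · have : t' = t + 1 := by omega
    rw [this, hnew]; omega

lemma P_step_b (m n : ℕ) {y : ℕ} (hy : y + 1 ≤ n) (h : y + m + 1 ∈ Pset m n) :
    y ∈ Pset m n := by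
  obtain ⟨t, ht, hall⟩ := h
  have hnew : (t + 1) * (n + 1) % (m + n + 2) = y := by
    rw [Pstep, ht]
    have : y + m + 1 + (n + 1) = y + (m + n + 2) := by ring
    rw [this, Nat.add_mod_right, Nat.mod_eq_of_lt (by omega)]
  refine ⟨t + 1, hnew, ?_⟩
  intro t' ht'
  rcases Nat.lt_or_ge t' (t+1) with h1 | h1
  · exact hall t' (by omega)
  · have : t' = t + 1 := by omega
    rw [this, hnew]; omega

lemma P_not_m1 (m n : ℕ) (hg : Nat.gcd (m + 1) (n + 1) = 1) :
    m + 1 ∉ Pset m n := by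
  have hco : Nat.Coprime (n + 1) (m + n + 2) := by
    have : m + n + 2 = (n + 1) + (m + 1) := by ring
    rw [this]
    simpa [Nat.Coprime, Nat.coprime_add_self_right] using
      (Nat.coprime_comm.mp (by exact hg))
  rintro ⟨t, ht, hall⟩
  -- (t+1)*(n+1) ≡ 0 mod (m+n+2), so m+n+2 ∣ t+1, so t ≥ m+n+1
  have h0 : (t + 1) * (n + 1) % (m + n + 2) = 0 := by
    rw [Pstep, ht]
    have : m + 1 + (n + 1) = m + n + 2 := by ring
    rw [this, Nat.mod_self]
  have hdvd : (m + n + 2) ∣ (t + 1) * (n + 1) := Nat.dvd_of_mod_eq_zero h0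
  have hdvd2 : (m + n + 2) ∣ (t + 1) :=
    (Nat.Coprime.dvd_of_dvd_mul_right (Nat.Coprime.symm hco) hdvd)
  have htge : m + n + 1 ≤ t := by
    have := Nat.le_of_dvd (by omega) hdvd2
    omega
  -- surjectivity: ∃ t' ≤ m+n+1 with t'*(n+1) % (m+n+2) = m+n+1
  have hsurj : ∃ t' ≤ m + n + 1, t' * (n + 1) % (m + n + 2) = m + n + 1 := by
    classical
    set N1 := m + n + 2 with hN1
    have hinj : Set.InjOn (fun t => t * (n + 1) % N1) (Finset.range N1) := by
      intro a ha b hb hab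
      simp only [Finset.coe_range, Set.mem_Iio] at ha hb
      have : a ≡ b [MOD N1] := by
        have h1 : a * (n+1) ≡ b * (n+1) [MOD N1] := hab
        exact Nat.ModEq.cancel_right_of_coprime (by simpa [Nat.Coprime] using hco.symm) h1
      have := Nat.ModEq.eq_of_lt_of_lt this ha hb
      omega
    have hmaps : ∀ a ∈ Finset.range N1, (fun t => t * (n + 1) % N1) a ∈ Finset.range N1 := by
      intro a _; simp [Nat.mod_lt _ (by omega : 0 < N1)]
    have hcard : (Finset.image (fun t => t * (n + 1) % N1) (Finset.range N1)).card
        = (Finset.range N1).card := Finset.card_image_of_injOn hinj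
    have heq : Finset.image (fun t => t * (n + 1) % N1) (Finset.range N1)
        = Finset.range N1 := by
      apply Finset.eq_of_subset_of_card_le
      · intro x hx
        simp only [Finset.mem_image] at hx
        obtain ⟨a, ha, rfl⟩ := hx
        exact hmaps a ha
      · rw [hcard]
    have hmem : m + n + 1 ∈ Finset.image (fun t => t * (n + 1) % N1) (Finset.range N1) := by
      rw [heq]; simp [hN1]
    simp only [Finset.mem_image, Finset.mem_range] at hmem
    obtain ⟨t', ht', h⟩ := hmem
    exact ⟨t', by omega, h⟩
  obtain ⟨t', ht', h⟩ := hsurj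
  exact hall t' (by omega) h

open scoped Classical in
noncomputable def fcol (m n : ℕ) (x : ℕ) : ℕ := if x ∈ Pset m n then x + n + 1 else x

open scoped Classical in
noncomputable def gcol (m n : ℕ) (y : ℕ) : ℕ := if y + m + 1 ∈ Pset m n then y else y + m + 1

section
variable (m n : ℕ)

lemma fcol_bounds {x : ℕ} (hx : x < m) : 1 ≤ fcol m n x ∧ fcol m n x ≤ m + n := by
  unfold fcol
  split_ifs with h
  · omega
  · have : x ≠ 0 := fun h0 => h (h0 ▸ P_zero m n)
    omega

lemma gcol_bounds (hg : Nat.gcd (m + 1) (n + 1) = 1) {y : ℕ} (hy : y < n) : 1 ≤ gcol m n y ∧ gcol m n y ≤ m + n := by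
  unfold gcol
  split_ifs with h
  · have : y ≠ 0 := fun h0 => P_not_m1 m n hg (by simpa [h0] using h)
    omega
  · omega

lemma fcol_inj {x x' : ℕ} (hx : x < m) (hx' : x' < m)
    (h : fcol m n x = fcol m n x') : x = x' := by
  unfold fcol at h
  split_ifs at h with h1 h2 h2
  · omega
  · -- x ∈ P, x' ∉ P, x + n + 1 = x'
    exact absurd (h ▸ P_step_a m n (by omega) h1) h2
  · exact absurd (h ▸ P_step_a m n (by omega) h2) h1
  · omega

lemma gcol_inj {y y' : ℕ} (hy : y < n) (hy' : y' < n)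
    (h : gcol m n y = gcol m n y') : y = y' := by
  unfold gcol at h
  split_ifs at h with h1 h2 h2
  · omega
  · have hyP := P_step_b m n (by omega) h1
    rw [h] at hyP; exact absurd hyP h2
  · have hyP := P_step_b m n (by omega) h2
    rw [← h] at hyP; exact absurd hyP h1
  · omega

lemma fcol_ne_gcol {x y : ℕ} (hx : x < m) (hy : y < n) :
    fcol m n x ≠ gcol m n y := by
  unfold fcol gcol
  split_ifs with h1 h2 h2 <;> intro h
  · omega
  · exact h2 (h ▸ P_step_a m n (by omega) h1)
  · have := P_step_b m n (by omega) h2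
    rw [← h] at this
    exact h1 this
  · omega
end

lemma fcol_cases (m n x : ℕ) : fcol m n x = x ∨ fcol m n x = x + n + 1 := by
  unfold fcol; split_ifs; exacts [Or.inr rfl, Or.inl rfl]

lemma gcol_cases (m n y : ℕ) : gcol m n y = y ∨ gcol m n y = y + m + 1 := by
  unfold gcol; split_ifs; exacts [Or.inl rfl, Or.inr rfl]

lemma center_surj (m n : ℕ) (hg : Nat.gcd (m + 1) (n + 1) = 1) {k : ℕ}
    (hk1 : 1 ≤ k) (hk2 : k ≤ m + n) :
    (∃ i < m, fcol m n i = k) ∨ (∃ j < n, gcol m n j = k) := by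
  classical
  set S : Finset ℕ :=
    (Finset.range m).image (fcol m n) ∪ (Finset.range n).image (gcol m n) with hS
  have hdisj : Disjoint ((Finset.range m).image (fcol m n))
      ((Finset.range n).image (gcol m n)) := by
    rw [Finset.disjoint_left]
    intro a ha hb
    simp only [Finset.mem_image, Finset.mem_range] at ha hb
    obtain ⟨i, hi, rfl⟩ := ha
    obtain ⟨j, hj, hj2⟩ := hb
    exact fcol_ne_gcol m n hi hj hj2.symm
  have hcard : S.card = m + n := by
    rw [hS, Finset.card_union_of_disjoint hdisj,
      Finset.card_image_of_injOn, Finset.card_image_of_injOn, Finset.card_range,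
      Finset.card_range]
    · intro a ha b hb h
      simp only [Finset.coe_range, Set.mem_Iio] at ha hb
      exact gcol_inj m n ha hb h
    · intro a ha b hb h
      simp only [Finset.coe_range, Set.mem_Iio] at ha hb
      exact fcol_inj m n ha hb h
  have hsub : S ⊆ Finset.Icc 1 (m + n) := by
    intro a ha
    rw [hS, Finset.mem_union] at ha
    rcases ha with ha | ha <;> simp only [Finset.mem_image, Finset.mem_range] at ha <;>
      obtain ⟨i, hi, rfl⟩ := ha <;> rw [Finset.mem_Icc]
    · exact fcol_bounds m n hi
    · exact gcol_bounds m n hg hi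
  have heq : S = Finset.Icc 1 (m + n) := by
    apply Finset.eq_of_subset_of_card_le hsub
    rw [hcard, Nat.card_Icc]; omega
  have : k ∈ S := by rw [heq, Finset.mem_Icc]; exact ⟨hk1, hk2⟩
  rw [hS, Finset.mem_union] at this
  rcases this with h | h <;> simp only [Finset.mem_image, Finset.mem_range] at h <;>
    [left; right] <;> obtain ⟨i, hi, hh⟩ := h <;> exact ⟨i, hi, hh⟩

noncomputable def colv (m n : ℕ) : (Fin 1 ⊕ Fin m ⊕ Fin n) → (Fin 1 ⊕ Fin m ⊕ Fin n) → ℕ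
  | .inl _, .inr (.inl i) => fcol m n i
  | .inr (.inl i), .inl _ => fcol m n i
  | .inl _, .inr (.inr j) => gcol m n j
  | .inr (.inr j), .inl _ => gcol m n j
  | .inr (.inl i), .inr (.inr j) => (i : ℕ) + (j : ℕ) + 1
  | .inr (.inr j), .inr (.inl i) => (i : ℕ) + (j : ℕ) + 1
  | _, _ => 0

lemma colv_symm (m n : ℕ) : ∀ x y, colv m n x y = colv m n y x := by
  rintro (x | x | x) (y | y | y) <;> rfl

noncomputable def cfun (m n : ℕ) : (K1mn m n).edgeSet → ℕ :=
  fun e => Sym2.lift ⟨colv m n, colv_symm m n⟩ e.1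

lemma adj_ca (m n : ℕ) (i : Fin m) : (K1mn m n).Adj (.inl 0) (.inr (.inl i)) := by
  show tripart m n _ ≠ tripart m n _
  simp [tripart]

lemma adj_cb (m n : ℕ) (j : Fin n) : (K1mn m n).Adj (.inl 0) (.inr (.inr j)) := by
  show tripart m n _ ≠ tripart m n _
  simp [tripart]

lemma adj_ab (m n : ℕ) (i : Fin m) (j : Fin n) :
    (K1mn m n).Adj (.inr (.inl i)) (.inr (.inr j)) := by
  show tripart m n _ ≠ tripart m n _
  simp [tripart]

lemma cfun_ca (m n : ℕ) (i : Fin m) (h) :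
    cfun m n ⟨s(.inl 0, .inr (.inl i)), h⟩ = fcol m n i := rfl

lemma cfun_cb (m n : ℕ) (j : Fin n) (h) :
    cfun m n ⟨s(.inl 0, .inr (.inr j)), h⟩ = gcol m n j := rfl

lemma cfun_ab (m n : ℕ) (i : Fin m) (j : Fin n) (h) :
    cfun m n ⟨s(.inr (.inl i), .inr (.inr j)), h⟩ = (i : ℕ) + (j : ℕ) + 1 := rfl

lemma edge_shape (m n : ℕ) (e : Sym2 (Fin 1 ⊕ Fin m ⊕ Fin n))
    (he : e ∈ (K1mn m n).edgeSet) :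
    (∃ i : Fin m, e = s(.inl 0, .inr (.inl i))) ∨
    (∃ j : Fin n, e = s(.inl 0, .inr (.inr j))) ∨
    (∃ (i : Fin m) (j : Fin n), e = s(.inr (.inl i), .inr (.inr j))) := by
  induction e using Sym2.ind with
  | _ x y =>
    rw [SimpleGraph.mem_edgeSet] at he
    have he' : tripart m n x ≠ tripart m n y := he
    rcases x with a | i | j <;> rcases y with a' | i' | j'
    · exact absurd rfl he'
    · exact Or.inl ⟨i', by rw [Fin.fin_one_eq_zero a]⟩
    · exact Or.inr (Or.inl ⟨j', by rw [Fin.fin_one_eq_zero a]⟩)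
    · exact Or.inl ⟨i, by rw [Fin.fin_one_eq_zero a', Sym2.eq_swap]⟩
    · exact absurd rfl he'
    · exact Or.inr (Or.inr ⟨i, j', rfl⟩)
    · exact Or.inr (Or.inl ⟨j, by rw [Fin.fin_one_eq_zero a', Sym2.eq_swap]⟩)
    · exact Or.inr (Or.inr ⟨i', j, Sym2.eq_swap⟩)
    · exact absurd rfl he'

theorem stmt_4 (m n : ℕ) (hm : 0 < m) (hn : 0 < n)
    (hg : Nat.gcd (m + 1) (n + 1) = 1) :
    ∃ c : (K1mn m n).edgeSet → ℕ, IsIntervalColoring (K1mn m n) (m + n) c := by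
  refine ⟨cfun m n, ?_, ?_, ?_, ?_⟩
  · -- bounds
    rintro ⟨es, he⟩
    rcases edge_shape m n es he with ⟨i, rfl⟩ | ⟨j, rfl⟩ | ⟨i, j, rfl⟩
    · rw [cfun_ca]; exact fcol_bounds m n i.isLt
    · rw [cfun_cb]; exact gcol_bounds m n hg j.isLt
    · rw [cfun_ab]; have := i.isLt; have := j.isLt; omega
  · -- all colors used
    intro k hk1 hk2
    rcases center_surj m n hg hk1 hk2 with ⟨i, hi, hfk⟩ | ⟨j, hj, hgk⟩
    · exact ⟨⟨s(.inl 0, .inr (.inl ⟨i, hi⟩)), adj_ca m n _⟩, hfk⟩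
    · exact ⟨⟨s(.inl 0, .inr (.inr ⟨j, hj⟩)), adj_cb m n _⟩, hgk⟩
  · -- proper
    rintro ⟨e1, he1⟩ ⟨e2, he2⟩ hne ⟨v, hv1, hv2⟩
    simp only [Subtype.mk.injEq] at hv1 hv2 ⊢
    have hne' : e1 ≠ e2 := fun h => hne (Subtype.ext h)
    rcases edge_shape m n e1 he1 with ⟨i, rfl⟩ | ⟨j, rfl⟩ | ⟨i, j, rfl⟩ <;>
      rcases edge_shape m n e2 he2 with ⟨i', rfl⟩ | ⟨j', rfl⟩ | ⟨i', j', rfl⟩ <;>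
      rw [Sym2.mem_iff] at hv1 hv2
    · rw [cfun_ca, cfun_ca]
      intro h
      exact hne' (by rw [Fin.val_injective (fcol_inj m n i.isLt i'.isLt h)])
    · rw [cfun_ca, cfun_cb]; exact fcol_ne_gcol m n i.isLt j'.isLt
    · rw [cfun_ca, cfun_ab]
      have hii' : (i : ℕ) = (i' : ℕ) := by
        rcases hv1 with rfl | rfl <;> rcases hv2 with h | h <;> simp_all
      rcases fcol_cases m n i with hF | hF <;> rw [hF] <;> have := j'.isLt <;> omega
    · rw [cfun_cb, cfun_ca]; exact (fcol_ne_gcol m n i'.isLt j.isLt).symm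
    · rw [cfun_cb, cfun_cb]
      intro h
      exact hne' (by rw [Fin.val_injective (gcol_inj m n j.isLt j'.isLt h)])
    · rw [cfun_cb, cfun_ab]
      have hjj' : (j : ℕ) = (j' : ℕ) := by
        rcases hv1 with rfl | rfl <;> rcases hv2 with h | h <;> simp_all
      rcases gcol_cases m n j with hG | hG <;> rw [hG] <;> have := i'.isLt <;> omega
    · rw [cfun_ab, cfun_ca]
      have hii' : (i : ℕ) = (i' : ℕ) := by
        rcases hv1 with rfl | rfl <;> rcases hv2 with h | h <;> simp_all
      rcases fcol_cases m n i' with hF | hF <;> rw [hF] <;> have := j.isLt <;> omega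
    · rw [cfun_ab, cfun_cb]
      have hjj' : (j : ℕ) = (j' : ℕ) := by
        rcases hv1 with rfl | rfl <;> rcases hv2 with h | h <;> simp_all
      rcases gcol_cases m n j' with hG | hG <;> rw [hG] <;> have := i.isLt <;> omega
    · rw [cfun_ab, cfun_ab]
      intro h
      have hsum : (i : ℕ) + (j : ℕ) = (i' : ℕ) + (j' : ℕ) := by omega
      have : ((i : ℕ) = (i' : ℕ)) ∨ ((j : ℕ) = (j' : ℕ)) := by
        rcases hv1 with rfl | rfl <;> rcases hv2 with h2 | h2 <;> simp_all
      have hi : (i : ℕ) = (i' : ℕ) := by omega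
      have hj : (j : ℕ) = (j' : ℕ) := by omega
      exact hne' (by rw [Fin.val_injective hi, Fin.val_injective hj])
  · -- spectra
    intro v
    rcases v with a | i | j
    · refine ⟨1, m + n, ?_⟩
      have ha : a = 0 := Fin.fin_one_eq_zero a
      subst ha
      ext k
      simp only [Spectrum, Set.mem_setOf_eq, Set.mem_Icc]
      constructor
      · rintro ⟨⟨es, he⟩, hv, rfl⟩
        rcases edge_shape m n es he with ⟨i, rfl⟩ | ⟨j, rfl⟩ | ⟨i, j, rfl⟩
        · rw [cfun_ca]; exact fcol_bounds m n i.isLt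
        · rw [cfun_cb]; exact gcol_bounds m n hg j.isLt
        · rw [Sym2.mem_iff] at hv; rcases hv with h | h <;> simp at h
      · rintro ⟨hk1, hk2⟩
        rcases center_surj m n hg hk1 hk2 with ⟨i, hi, hfk⟩ | ⟨j, hj, hgk⟩
        · exact ⟨⟨s(.inl 0, .inr (.inl ⟨i, hi⟩)), adj_ca m n _⟩, Sym2.mem_mk_left _ _, hfk⟩
        · exact ⟨⟨s(.inl 0, .inr (.inr ⟨j, hj⟩)), adj_cb m n _⟩, Sym2.mem_mk_left _ _, hgk⟩
    · -- a-vertex i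
      have hspec : ∀ k, (∃ e : (K1mn m n).edgeSet, (.inr (.inl i) : Fin 1 ⊕ Fin m ⊕ Fin n) ∈ (e : Sym2 _) ∧ cfun m n e = k)
          ↔ (k = fcol m n i ∨ ((i : ℕ) + 1 ≤ k ∧ k ≤ (i : ℕ) + n)) := by
        intro k
        constructor
        · rintro ⟨⟨es, he⟩, hv, rfl⟩
          rcases edge_shape m n es he with ⟨i', rfl⟩ | ⟨j', rfl⟩ | ⟨i', j', rfl⟩ <;>
            rw [Sym2.mem_iff] at hv
          · have : i = i' := by rcases hv with h | h <;> simp_all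
            subst this
            left; rw [cfun_ca]
          · rcases hv with h | h <;> simp at h
          · have : i = i' := by rcases hv with h | h <;> simp_all
            subst this
            right; rw [cfun_ab]; have := j'.isLt; omega
        · rintro (rfl | ⟨hk1, hk2⟩)
          · exact ⟨⟨s(.inl 0, .inr (.inl i)), adj_ca m n _⟩, Sym2.mem_mk_right _ _, rfl⟩
          · refine ⟨⟨s(.inr (.inl i), .inr (.inr ⟨k - (i : ℕ) - 1, by omega⟩)), adj_ab m n _ _⟩,
              Sym2.mem_mk_left _ _, ?_⟩
            refine (cfun_ab m n _ _ _).trans ?_; simp; omega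
      rcases fcol_cases m n (i : ℕ) with hF | hF
      · refine ⟨(i : ℕ), (i : ℕ) + n, ?_⟩
        ext k
        simp only [Spectrum, Set.mem_setOf_eq, Set.mem_Icc]
        rw [hspec k, hF]
        omega
      · refine ⟨(i : ℕ) + 1, (i : ℕ) + n + 1, ?_⟩
        ext k
        simp only [Spectrum, Set.mem_setOf_eq, Set.mem_Icc]
        rw [hspec k, hF]
        omega
    · -- b-vertex j
      have hspec : ∀ k, (∃ e : (K1mn m n).edgeSet, (.inr (.inr j) : Fin 1 ⊕ Fin m ⊕ Fin n) ∈ (e : Sym2 _) ∧ cfun m n e = k)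
          ↔ (k = gcol m n j ∨ ((j : ℕ) + 1 ≤ k ∧ k ≤ (j : ℕ) + m)) := by
        intro k
        constructor
        · rintro ⟨⟨es, he⟩, hv, rfl⟩
          rcases edge_shape m n es he with ⟨i', rfl⟩ | ⟨j', rfl⟩ | ⟨i', j', rfl⟩ <;>
            rw [Sym2.mem_iff] at hv
          · rcases hv with h | h <;> simp at h
          · have : j = j' := by rcases hv with h | h <;> simp_all
            subst this
            left; rw [cfun_cb]
          · have : j = j' := by rcases hv with h | h <;> simp_all
            subst this
            right; rw [cfun_ab]; have := i'.isLt; omega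
        · rintro (rfl | ⟨hk1, hk2⟩)
          · exact ⟨⟨s(.inl 0, .inr (.inr j)), adj_cb m n _⟩, Sym2.mem_mk_right _ _, rfl⟩
          · refine ⟨⟨s(.inr (.inl ⟨k - (j : ℕ) - 1, by omega⟩), .inr (.inr j)), adj_ab m n _ _⟩,
              Sym2.mem_mk_right _ _, ?_⟩
            refine (cfun_ab m n _ _ _).trans ?_; simp; omega
      rcases gcol_cases m n (j : ℕ) with hG | hG
      · refine ⟨(j : ℕ), (j : ℕ) + m, ?_⟩
        ext k
        simp only [Spectrum, Set.mem_setOf_eq, Set.mem_Icc]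
        rw [hspec k, hG]
        omega
      · refine ⟨(j : ℕ) + 1, (j : ℕ) + m + 1, ?_⟩
        ext k
        simp only [Spectrum, Set.mem_setOf_eq, Set.mem_Icc]
        rw [hspec k, hG]
        omega
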